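/- For real numbers a > b ≥ c > d > 0, the function f(x) = (a^x - b^x)/(c^x - d^x), extended continuously at x = 0, is strictly convex on the real line. -/

import Mathlib

open MeasureTheory intervalIntegral Set

lemma aux_scalar (t : ℝ) : 0 ≤ t * ((t - 2) * Real.exp t + (t + 2)) := by
  have hderiv : ∀ s : ℝ, HasDerivAt (fun u : ℝ => (u - 2) * Real.exp u + (u + 2))
      ((s - 1) * Real.exp s + 1) s := by
    intro s
    have h1 : HasDerivAt (fun u : ℝ => (u - 2) * Real.exp u)
        (1 * Real.exp s + (s - 2) * Real.exp s) s :=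
      ((hasDerivAt_id s).sub_const 2).mul (Real.hasDerivAt_exp s)
    have h2 := h1.add ((hasDerivAt_id s).add_const 2)
    refine h2.congr_deriv ?_
    ring
  have hmono : Monotone (fun u : ℝ => (u - 2) * Real.exp u + (u + 2)) := by
    apply monotone_of_deriv_nonneg
    · exact fun s => (hderiv s).differentiableAt
    · intro s
      rw [(hderiv s).deriv]
      have he : Real.exp (-s) * Real.exp s = 1 := by rw [← Real.exp_add]; simp
      nlinarith [mul_le_mul_of_nonneg_right (Real.add_one_le_exp (-s)) (Real.exp_pos s).le]
  have h0 : (fun u : ℝ => (u - 2) * Real.exp u + (u + 2)) 0 = 0 := by simp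
  rcases le_or_gt 0 t with ht | ht
  · have := hmono (show (0:ℝ) ≤ t from ht)
    rw [h0] at this
    exact mul_nonneg ht this
  · have h1 := hmono (show t ≤ (0:ℝ) from ht.le)
    rw [h0] at h1
    simp only at h1
    nlinarith [mul_nonneg (neg_nonneg.2 ht.le) (neg_nonneg.2 h1)]

lemma aux_cont (k : ℕ) (x : ℝ) : Continuous fun s : ℝ => s ^ k * Real.exp (s * x) := by
  fun_prop

lemma aux_deriv (k : ℕ) (p q x₀ : ℝ) :
    HasDerivAt (fun x => ∫ s in p..q, s ^ k * Real.exp (s * x))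
      (∫ s in p..q, s ^ (k + 1) * Real.exp (s * x₀)) x₀ := by
  set M : ℝ := max |p| |q| with hM
  have hM0 : 0 ≤ M := le_trans (abs_nonneg p) (le_max_left _ _)
  have habs : ∀ t ∈ Set.uIoc p q, |t| ≤ M := by
    intro t ht
    rw [Set.mem_uIoc] at ht
    rw [abs_le]
    rcases ht with ⟨h1, h2⟩ | ⟨h1, h2⟩ <;>
      constructor <;>
      nlinarith [le_abs_self p, le_abs_self q, neg_abs_le p, neg_abs_le q,
        le_max_left |p| |q|, le_max_right |p| |q|]
  have key := intervalIntegral.hasDerivAt_integral_of_dominated_loc_of_deriv_le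
    (F := fun (x : ℝ) (t : ℝ) => t ^ k * Real.exp (t * x))
    (F' := fun (x : ℝ) (t : ℝ) => t ^ (k + 1) * Real.exp (t * x))
    (x₀ := x₀) (a := p) (b := q) (μ := volume)
    (bound := fun _ => M ^ (k + 1) * Real.exp (M * (|x₀| + 1)))
    (Metric.ball_mem_nhds x₀ one_pos)
    (Filter.Eventually.of_forall fun x => (aux_cont k x).aestronglyMeasurable)
    ((aux_cont k x₀).intervalIntegrable p q)
    ((aux_cont (k + 1) x₀).aestronglyMeasurable)
    ?_ (intervalIntegrable_const) ?_
  · exact key.2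
  · refine Filter.Eventually.of_forall fun t ht x hx => ?_
    have htM := habs t ht
    have hxb : |x| ≤ |x₀| + 1 := by
      have h1 : |x - x₀| < 1 := by rwa [Metric.mem_ball, Real.dist_eq] at hx
      have h2 := abs_sub_abs_le_abs_sub x x₀
      linarith
    have h3 : t * x ≤ M * (|x₀| + 1) := by
      calc t * x ≤ |t * x| := le_abs_self _
        _ = |t| * |x| := abs_mul t x
        _ ≤ M * (|x₀| + 1) := by
            apply mul_le_mul htM hxb (abs_nonneg x) hM0
    rw [Real.norm_eq_abs, abs_mul, abs_pow, Real.abs_exp]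
    exact mul_le_mul (pow_le_pow_left₀ (abs_nonneg t) htM _)
      (Real.exp_le_exp.2 h3) (Real.exp_pos _).le (by positivity)
  · refine Filter.Eventually.of_forall fun t _ x _ => ?_
    have h1 : HasDerivAt (fun x : ℝ => t * x) t x := by
      simpa using (hasDerivAt_id x).const_mul t
    have h2 := (Real.hasDerivAt_exp (t * x)).comp x h1
    have h3 := h2.const_mul (t ^ k)
    refine h3.congr_deriv ?_
    ring

lemma aux_int0 (p q x : ℝ) (hx : x ≠ 0) :
    ∫ s in p..q, Real.exp (s * x) = (Real.exp (q * x) - Real.exp (p * x)) / x := by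
  have hF : ∀ s : ℝ, HasDerivAt (fun s : ℝ => Real.exp (s * x) / x) (Real.exp (s * x)) s := by
    intro s
    have h1 : HasDerivAt (fun s : ℝ => s * x) x s := by
      simpa using (hasDerivAt_id s).mul_const x
    have h2 := ((Real.hasDerivAt_exp (s * x)).comp s h1).div_const x
    refine h2.congr_deriv ?_
    field_simp
  rw [integral_eq_sub_of_hasDerivAt (fun s _ => hF s)
    (((Real.continuous_exp.comp (continuous_id.mul continuous_const))).intervalIntegrable p q)]
  ring

lemma aux_int1 (p q x : ℝ) (hx : x ≠ 0) :
    ∫ s in p..q, s * Real.exp (s * x)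
      = ((q * x - 1) * Real.exp (q * x) - (p * x - 1) * Real.exp (p * x)) / x ^ 2 := by
  have hF : ∀ s : ℝ, HasDerivAt (fun s : ℝ => (s * x - 1) * Real.exp (s * x) / x ^ 2)
      (s * Real.exp (s * x)) s := by
    intro s
    have h1 : HasDerivAt (fun s : ℝ => s * x) x s := by
      simpa using (hasDerivAt_id s).mul_const x
    have hexp := (Real.hasDerivAt_exp (s * x)).comp s h1
    have h2 := ((h1.sub_const 1).mul hexp).div_const (x ^ 2)
    refine h2.congr_deriv ?_
    simp only [Function.comp_apply]
    field_simp
    ring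
  rw [integral_eq_sub_of_hasDerivAt (fun s _ => hF s)
    ((continuous_id.mul (Real.continuous_exp.comp (continuous_id.mul continuous_const))).intervalIntegrable p q)]
  ring

lemma aux_int2 (p q x : ℝ) (hx : x ≠ 0) :
    ∫ s in p..q, s ^ 2 * Real.exp (s * x)
      = ((q ^ 2 * x ^ 2 - 2 * (q * x) + 2) * Real.exp (q * x)
        - (p ^ 2 * x ^ 2 - 2 * (p * x) + 2) * Real.exp (p * x)) / x ^ 3 := by
  have hF : ∀ s : ℝ, HasDerivAt
      (fun s : ℝ => (s ^ 2 * x ^ 2 - 2 * (s * x) + 2) * Real.exp (s * x) / x ^ 3)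
      (s ^ 2 * Real.exp (s * x)) s := by
    intro s
    have h1 : HasDerivAt (fun s : ℝ => s * x) x s := by
      simpa using (hasDerivAt_id s).mul_const x
    have hexp := (Real.hasDerivAt_exp (s * x)).comp s h1
    have hpoly : HasDerivAt (fun s : ℝ => s ^ 2 * x ^ 2 - 2 * (s * x) + 2)
        (2 * s * x ^ 2 - 2 * x) s := by
      have ha := ((hasDerivAt_pow 2 s).mul_const (x ^ 2)).sub ((h1.const_mul 2)) |>.add_const 2
      refine ha.congr_deriv ?_
      push_cast
      ring
    have h2 := (hpoly.mul hexp).div_const (x ^ 3)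
    refine h2.congr_deriv ?_
    simp only [Function.comp_apply]
    field_simp
    ring
  rw [integral_eq_sub_of_hasDerivAt (fun s _ => hF s)
    (((continuous_pow 2).mul (Real.continuous_exp.comp (continuous_id.mul continuous_const))).intervalIntegrable p q)]
  ring

lemma cont_exp (x : ℝ) : Continuous fun s : ℝ => Real.exp (s * x) := by fun_prop

lemma cont_mexp (x : ℝ) : Continuous fun s : ℝ => s * Real.exp (s * x) := by fun_prop

-- linear combination: ∫ (s − c) e^{sx}

lemma aux_lin (p q x c : ℝ) :
    ∫ s in p..q, (s - c) * Real.exp (s * x)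
      = (∫ s in p..q, s * Real.exp (s * x)) - c * ∫ s in p..q, Real.exp (s * x) := by
  have h : EqOn (fun s : ℝ => (s - c) * Real.exp (s * x))
      (fun s : ℝ => s * Real.exp (s * x) - c * Real.exp (s * x)) (Set.uIcc p q) :=
    fun s _ => by ring
  rw [intervalIntegral.integral_congr h]
  erw [intervalIntegral.integral_sub ((cont_mexp x).intervalIntegrable p q)
      ((continuous_const.mul (cont_exp x)).intervalIntegrable p q),
    intervalIntegral.integral_const_mul]

lemma aux_lin2 (p q x c : ℝ) :
    ∫ s in p..q, (c - s) * Real.exp (s * x)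
      = c * (∫ s in p..q, Real.exp (s * x)) - ∫ s in p..q, s * Real.exp (s * x) := by
  have h : EqOn (fun s : ℝ => (c - s) * Real.exp (s * x))
      (fun s : ℝ => c * Real.exp (s * x) - s * Real.exp (s * x)) (Set.uIcc p q) :=
    fun s _ => by ring
  rw [intervalIntegral.integral_congr h]
  erw [intervalIntegral.integral_sub ((continuous_const.mul (cont_exp x)).intervalIntegrable p q)
      ((cont_mexp x).intervalIntegrable p q),
    intervalIntegral.integral_const_mul]

lemma aux_expand (p q x A B : ℝ) :
    ∫ s in p..q, (A * s - B) ^ 2 * Real.exp (s * x)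
      = A ^ 2 * (∫ s in p..q, s ^ 2 * Real.exp (s * x))
        - (2 * A * B * (∫ s in p..q, s * Real.exp (s * x))
          - B ^ 2 * ∫ s in p..q, Real.exp (s * x)) := by
  have h : EqOn (fun s : ℝ => (A * s - B) ^ 2 * Real.exp (s * x))
      (fun s : ℝ => A ^ 2 * (s ^ 2 * Real.exp (s * x))
        - (2 * A * B * (s * Real.exp (s * x)) - B ^ 2 * Real.exp (s * x))) (Set.uIcc p q) :=
    fun s _ => by ring
  rw [intervalIntegral.integral_congr h]
  erw [intervalIntegral.integral_sub ((continuous_const.mul (aux_cont 2 x)).intervalIntegrable p q)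
      (((continuous_const.mul (cont_mexp x)).sub
        (continuous_const.mul (cont_exp x))).intervalIntegrable p q),
    intervalIntegral.integral_sub ((continuous_const.mul (cont_mexp x)).intervalIntegrable p q)
      ((continuous_const.mul (cont_exp x)).intervalIntegrable p q),
    intervalIntegral.integral_const_mul, intervalIntegral.integral_const_mul,
    intervalIntegral.integral_const_mul]

-- key moment inequality

lemma aux_key (p q x : ℝ) (hpq : p < q) :
    (∫ s in p..q, Real.exp (s * x)) * (∫ s in p..q, s ^ 2 * Real.exp (s * x))
      - (∫ s in p..q, s * Real.exp (s * x)) ^ 2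
      ≤ (q * (∫ s in p..q, Real.exp (s * x)) - ∫ s in p..q, s * Real.exp (s * x)) ^ 2 := by
  rcases eq_or_ne x 0 with hx | hx
  · subst hx
    have e0 : ∫ s in p..q, Real.exp (s * 0) = q - p := by
      simp
    have e1 : ∫ s in p..q, s * Real.exp (s * 0) = (q ^ 2 - p ^ 2) / 2 := by
      simp [integral_id]
    have e2 : ∫ s in p..q, s ^ 2 * Real.exp (s * 0) = (q ^ 3 - p ^ 3) / 3 := by
      simp only [mul_zero, Real.exp_zero, mul_one]
      rw [integral_pow]
      norm_num
    rw [e0, e1, e2]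
    nlinarith [sq_nonneg ((q - p) ^ 2), sq_nonneg (q - p)]
  · have hE : Real.exp (q * x) = Real.exp (p * x) * Real.exp ((q - p) * x) := by
      rw [← Real.exp_add]; ring_nf
    have hk := aux_scalar ((q - p) * x)
    have hx4 : 0 < x ^ 4 := by positivity
    rw [aux_int0 p q x hx, aux_int1 p q x hx, aux_int2 p q x hx, hE]
    set E := Real.exp (p * x) with hEdef
    set Y := Real.exp ((q - p) * x) with hYdef
    have hident :
        (q * ((E * Y - E) / x) - ((q * x - 1) * (E * Y) - (p * x - 1) * E) / x ^ 2) ^ 2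
          + (((q * x - 1) * (E * Y) - (p * x - 1) * E) / x ^ 2) ^ 2
          - ((E * Y - E) / x) *
            (((q ^ 2 * x ^ 2 - 2 * (q * x) + 2) * (E * Y)
              - (p ^ 2 * x ^ 2 - 2 * (p * x) + 2) * E) / x ^ 3)
          = E ^ 2 * (((q - p) * x) * ((((q - p) * x) - 2) * Y + (((q - p) * x) + 2))) / x ^ 4 := by
      field_simp
      ring
    nlinarith [hident, div_nonneg (mul_nonneg (sq_nonneg E) hk) hx4.le]

lemma aux_CS (n0 n1 n2 d0 d1 : ℝ) (f1 : 0 < n0)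
    (h : 0 ≤ (n0 * d0) ^ 2 * n2 - (2 * (n0 * d0) * (n0 * d1 + (n1 * d0 - n0 * d1)) * n1
      - (n0 * d1 + (n1 * d0 - n0 * d1)) ^ 2 * n0)) :
    (n1 * d0 - n0 * d1) ^ 2 ≤ n0 * (n2 * d0 ^ 2 - 2 * n1 * d0 * d1 + n0 * d1 ^ 2) := by
  have e : (n0 * d0) ^ 2 * n2 - (2 * (n0 * d0) * (n0 * d1 + (n1 * d0 - n0 * d1)) * n1
      - (n0 * d1 + (n1 * d0 - n0 * d1)) ^ 2 * n0)
      = n0 * (n0 * (n2 * d0 ^ 2 - 2 * n1 * d0 * d1 + n0 * d1 ^ 2)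
        - (n1 * d0 - n0 * d1) ^ 2) := by ring
  rw [e] at h
  have := le_of_mul_le_mul_left (by linarith : n0 * 0 ≤ n0 *
    (n0 * (n2 * d0 ^ 2 - 2 * n1 * d0 * d1 + n0 * d1 ^ 2) - (n1 * d0 - n0 * d1) ^ 2)) f1
  linarith

lemma aux_G (γ n0 n1 n2 d0 d1 d2 : ℝ)
    (f1 : 0 < n0) (f2 : 0 < d0)
    (f3 : 0 < n1 - γ * n0) (f4 : 0 ≤ γ * d0 - d1)
    (f5 : d0 * d2 - d1 ^ 2 ≤ (γ * d0 - d1) ^ 2)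
    (f6 : (n1 * d0 - n0 * d1) ^ 2 ≤ n0 * (n2 * d0 ^ 2 - 2 * n1 * d0 * d1 + n0 * d1 ^ 2)) :
    0 < n2 * d0 ^ 2 - 2 * n1 * d1 * d0 + 2 * n0 * d1 ^ 2 - n0 * d0 * d2 := by
  have h1 : n0 * (γ * d0 - d1) < n1 * d0 - n0 * d1 := by nlinarith [mul_pos f2 f3]
  have h3 : (n0 * (γ * d0 - d1)) ^ 2 < (n1 * d0 - n0 * d1) ^ 2 := by
    have h2 : 0 ≤ n0 * (γ * d0 - d1) := mul_nonneg f1.le f4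
    nlinarith
  have h4 : n0 ^ 2 * (d0 * d2 - d1 ^ 2) ≤ n0 ^ 2 * (γ * d0 - d1) ^ 2 :=
    mul_le_mul_of_nonneg_left f5 (sq_nonneg n0)
  have h5 : 0 < n0 * (n2 * d0 ^ 2 - 2 * n1 * d1 * d0 + 2 * n0 * d1 ^ 2 - n0 * d0 * d2) := by
    nlinarith
  by_contra hcon
  push_neg at hcon
  nlinarith [mul_nonpos_of_nonneg_of_nonpos f1.le hcon]

lemma aux_deriv0 (p q x₀ : ℝ) :
    HasDerivAt (fun x => ∫ s in p..q, Real.exp (s * x))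
      (∫ s in p..q, s * Real.exp (s * x₀)) x₀ := by
  have h := aux_deriv 0 p q x₀
  have e1 : (fun x => ∫ s in p..q, s ^ 0 * Real.exp (s * x))
      = fun x => ∫ s in p..q, Real.exp (s * x) := by
    funext y; apply intervalIntegral.integral_congr; intro s _; simp
  have e2 : (∫ s in p..q, s ^ (0 + 1) * Real.exp (s * x₀))
      = ∫ s in p..q, s * Real.exp (s * x₀) := by
    apply intervalIntegral.integral_congr; intro s _; simp
  rwa [e1, e2] at h

lemma aux_deriv1 (p q x₀ : ℝ) :
    HasDerivAt (fun x => ∫ s in p..q, s * Real.exp (s * x))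
      (∫ s in p..q, s ^ 2 * Real.exp (s * x₀)) x₀ := by
  have h := aux_deriv 1 p q x₀
  have e1 : (fun x => ∫ s in p..q, s ^ 1 * Real.exp (s * x))
      = fun x => ∫ s in p..q, s * Real.exp (s * x) := by
    funext y; apply intervalIntegral.integral_congr; intro s _; simp
  rwa [e1] at h

lemma main_aux (β α δ γ : ℝ) (hβα : β < α) (hγβ : γ ≤ β) (hδγ : δ < γ) :
    StrictConvexOn ℝ Set.univ
      (fun x => (∫ s in β..α, Real.exp (s * x)) / (∫ s in δ..γ, Real.exp (s * x))) := by
  have hN0 : ∀ x : ℝ, 0 < ∫ s in β..α, Real.exp (s * x) := fun x =>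
    intervalIntegral_pos_of_pos ((cont_exp x).intervalIntegrable _ _)
      (fun s => Real.exp_pos _) hβα
  have hD0 : ∀ x : ℝ, 0 < ∫ s in δ..γ, Real.exp (s * x) := fun x =>
    intervalIntegral_pos_of_pos ((cont_exp x).intervalIntegrable _ _)
      (fun s => Real.exp_pos _) hδγ
  have hg1 : ∀ x : ℝ, HasDerivAt
      (fun x => (∫ s in β..α, Real.exp (s * x)) / (∫ s in δ..γ, Real.exp (s * x)))
      (((∫ s in β..α, s * Real.exp (s * x)) * (∫ s in δ..γ, Real.exp (s * x))
        - (∫ s in β..α, Real.exp (s * x)) * (∫ s in δ..γ, s * Real.exp (s * x)))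
        / (∫ s in δ..γ, Real.exp (s * x)) ^ 2) x := fun x =>
    (aux_deriv0 β α x).div (aux_deriv0 δ γ x) (hD0 x).ne'
  apply strictConvexOn_univ_of_deriv2_pos
  · exact continuous_iff_continuousAt.2 fun x => (hg1 x).differentiableAt.continuousAt
  intro x
  have hd1 : deriv (fun x => (∫ s in β..α, Real.exp (s * x)) / (∫ s in δ..γ, Real.exp (s * x)))
      = fun x => ((∫ s in β..α, s * Real.exp (s * x)) * (∫ s in δ..γ, Real.exp (s * x))
        - (∫ s in β..α, Real.exp (s * x)) * (∫ s in δ..γ, s * Real.exp (s * x)))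
        / (∫ s in δ..γ, Real.exp (s * x)) ^ 2 := funext fun y => (hg1 y).deriv
  have hu : HasDerivAt (fun x => (∫ s in β..α, s * Real.exp (s * x)) * (∫ s in δ..γ, Real.exp (s * x))
        - (∫ s in β..α, Real.exp (s * x)) * (∫ s in δ..γ, s * Real.exp (s * x)))
      ((∫ s in β..α, s ^ 2 * Real.exp (s * x)) * (∫ s in δ..γ, Real.exp (s * x))
        + (∫ s in β..α, s * Real.exp (s * x)) * (∫ s in δ..γ, s * Real.exp (s * x))
        - ((∫ s in β..α, s * Real.exp (s * x)) * (∫ s in δ..γ, s * Real.exp (s * x))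
          + (∫ s in β..α, Real.exp (s * x)) * (∫ s in δ..γ, s ^ 2 * Real.exp (s * x)))) x :=
    ((aux_deriv1 β α x).mul (aux_deriv0 δ γ x)).sub
      ((aux_deriv0 β α x).mul (aux_deriv1 δ γ x))
  have hv : HasDerivAt (fun x => (∫ s in δ..γ, Real.exp (s * x)) ^ 2)
      ((2 : ℕ) * (∫ s in δ..γ, Real.exp (s * x)) ^ 1 * (∫ s in δ..γ, s * Real.exp (s * x))) x :=
    (aux_deriv0 δ γ x).pow 2
  have hq := hu.div hv (pow_ne_zero 2 (hD0 x).ne')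
  -- the second derivative value
  rw [show (deriv^[2] (fun x => (∫ s in β..α, Real.exp (s * x)) / (∫ s in δ..γ, Real.exp (s * x)))) x
    = deriv (deriv (fun x => (∫ s in β..α, Real.exp (s * x)) / (∫ s in δ..γ, Real.exp (s * x)))) x
    from rfl]
  rw [hd1]
  erw [hq.deriv]
  -- now a concrete positivity goal
  have hGpos : 0 < (∫ s in β..α, s ^ 2 * Real.exp (s * x)) * (∫ s in δ..γ, Real.exp (s * x)) ^ 2
      - 2 * (∫ s in β..α, s * Real.exp (s * x)) * (∫ s in δ..γ, s * Real.exp (s * x))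
        * (∫ s in δ..γ, Real.exp (s * x))
      + 2 * (∫ s in β..α, Real.exp (s * x)) * (∫ s in δ..γ, s * Real.exp (s * x)) ^ 2
      - (∫ s in β..α, Real.exp (s * x)) * (∫ s in δ..γ, Real.exp (s * x))
        * (∫ s in δ..γ, s ^ 2 * Real.exp (s * x)) := by
    apply aux_G γ
    · exact hN0 x
    · exact hD0 x
    · have hpos : 0 < ∫ s in β..α, (s - γ) * Real.exp (s * x) := by
        apply intervalIntegral_pos_of_pos_on
          ((by fun_prop : Continuous fun s : ℝ => (s - γ) * Real.exp (s * x)).intervalIntegrable _ _)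
          (fun s hs => mul_pos (by linarith [hs.1]) (Real.exp_pos _)) hβα
      rw [aux_lin] at hpos
      linarith
    · have hpos : 0 ≤ ∫ s in δ..γ, (γ - s) * Real.exp (s * x) := by
        apply intervalIntegral.integral_nonneg hδγ.le
        intro s hs
        exact mul_nonneg (by linarith [hs.2]) (Real.exp_pos _).le
      rw [aux_lin2] at hpos
      linarith
    · exact aux_key δ γ x hδγ
    · apply aux_CS _ _ _ _ _ (hN0 x)
      rw [← aux_expand]
      apply intervalIntegral.integral_nonneg hβα.le
      intro s _
      positivity
  have hnum : ((∫ s in β..α, s ^ 2 * Real.exp (s * x)) * (∫ s in δ..γ, Real.exp (s * x))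
        + (∫ s in β..α, s * Real.exp (s * x)) * (∫ s in δ..γ, s * Real.exp (s * x))
        - ((∫ s in β..α, s * Real.exp (s * x)) * (∫ s in δ..γ, s * Real.exp (s * x))
          + (∫ s in β..α, Real.exp (s * x)) * (∫ s in δ..γ, s ^ 2 * Real.exp (s * x))))
        * (∫ s in δ..γ, Real.exp (s * x)) ^ 2
      - ((∫ s in β..α, s * Real.exp (s * x)) * (∫ s in δ..γ, Real.exp (s * x))
        - (∫ s in β..α, Real.exp (s * x)) * (∫ s in δ..γ, s * Real.exp (s * x)))
        * ((2 : ℕ) * (∫ s in δ..γ, Real.exp (s * x)) ^ 1 * (∫ s in δ..γ, s * Real.exp (s * x)))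
      = (∫ s in δ..γ, Real.exp (s * x)) *
        ((∫ s in β..α, s ^ 2 * Real.exp (s * x)) * (∫ s in δ..γ, Real.exp (s * x)) ^ 2
        - 2 * (∫ s in β..α, s * Real.exp (s * x)) * (∫ s in δ..γ, s * Real.exp (s * x))
          * (∫ s in δ..γ, Real.exp (s * x))
        + 2 * (∫ s in β..α, Real.exp (s * x)) * (∫ s in δ..γ, s * Real.exp (s * x)) ^ 2
        - (∫ s in β..α, Real.exp (s * x)) * (∫ s in δ..γ, Real.exp (s * x))
          * (∫ s in δ..γ, s ^ 2 * Real.exp (s * x))) := by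
    push_cast
    ring
  rw [hnum]
  exact div_pos (mul_pos (hD0 x) hGpos) (pow_pos (pow_pos (hD0 x) 2) 2)

theorem stmt5 (a b c d : ℝ) (hab : a > b) (hbc : b ≥ c) (hcd : c > d) (hd : d > 0) :
    StrictConvexOn ℝ Set.univ (fun x : ℝ =>
      if x = 0 then (Real.log a - Real.log b) / (Real.log c - Real.log d)
      else (a ^ x - b ^ x) / (c ^ x - d ^ x)) := by
  have hc : 0 < c := hd.trans hcd
  have hb : 0 < b := hc.trans_le hbc
  have ha : 0 < a := hb.trans hab
  have hβα : Real.log b < Real.log a := Real.log_lt_log hb hab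
  have hγβ : Real.log c ≤ Real.log b := Real.log_le_log hc hbc
  have hδγ : Real.log d < Real.log c := Real.log_lt_log hd hcd
  have hmain := main_aux (Real.log b) (Real.log a) (Real.log d) (Real.log c) hβα hγβ hδγ
  have hfun : (fun x : ℝ =>
      if x = 0 then (Real.log a - Real.log b) / (Real.log c - Real.log d)
      else (a ^ x - b ^ x) / (c ^ x - d ^ x))
      = fun x => (∫ s in Real.log b..Real.log a, Real.exp (s * x))
          / (∫ s in Real.log d..Real.log c, Real.exp (s * x)) := by
    funext x
    rcases eq_or_ne x 0 with hx | hx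
    · subst hx
      rw [if_pos rfl,
        show (∫ s in Real.log b..Real.log a, Real.exp (s * 0)) = Real.log a - Real.log b by simp,
        show (∫ s in Real.log d..Real.log c, Real.exp (s * 0)) = Real.log c - Real.log d by simp]
    · rw [if_neg hx, aux_int0 _ _ _ hx, aux_int0 _ _ _ hx,
        Real.rpow_def_of_pos ha, Real.rpow_def_of_pos hb, Real.rpow_def_of_pos hc,
        Real.rpow_def_of_pos hd]
      rcases eq_or_ne (Real.exp (Real.log c * x) - Real.exp (Real.log d * x)) 0 with h | h
      · rw [h]; simp
      · field_simp
  rw [hfun]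
  exact hmain
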